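/- Let β ≥ 1, b > 0, and let ν be a finite positive Borel measure on ℂ that has all exponential moments and for which there exists R > 0 with ν({λ ∈ ℂ : Re λ < b·|Im λ|^(1/β) and |λ| > R}) = 0. Then for every s > 0 and every t ≥ 0, ∫_ℂ e^(s·|λ|^(1/β)) · e^(t·Re λ) dν(λ) < ∞. -/

import Mathlib

open MeasureTheory

private lemma real_rpow_add_le_add_rpow {x y p : ℝ} (hx : 0 ≤ x) (hy : 0 ≤ y)
    (hp : 0 ≤ p) (hp1 : p ≤ 1) : (x + y) ^ p ≤ x ^ p + y ^ p := by
  have h := NNReal.rpow_add_le_add_rpow (x.toNNReal) (y.toNNReal) hp hp1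
  have := NNReal.coe_le_coe.2 h
  push_cast at this
  rwa [Real.coe_toNNReal _ hx, Real.coe_toNNReal _ hy] at this

private lemma rpow_le_add_one {x p : ℝ} (hx : 0 ≤ x) (hp : 0 ≤ p) (hp1 : p ≤ 1) :
    x ^ p ≤ x + 1 := by
  rcases le_or_gt x 1 with h | h
  · have : x ^ p ≤ 1 := Real.rpow_le_one hx h hp
    linarith
  · have : x ^ p ≤ x ^ (1 : ℝ) := Real.rpow_le_rpow_of_exponent_le h.le hp1
    rw [Real.rpow_one] at this
    linarith

/-- Let `β ≥ 1`, `b > 0`, and let `ν` be a finite positive Borel measure on `ℂ` with all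
exponential moments such that for some `R > 0` the set
`{λ : Re λ < b·|Im λ|^(1/β) and |λ| > R}` is `ν`-null. Then for every `s > 0` and `t ≥ 0`,
`∫ e^(s·|λ|^(1/β)) · e^(t·Re λ) dν(λ) < ∞`. -/
theorem stmt_2 (β b : ℝ) (hβ : 1 ≤ β) (hb : 0 < b)
    (ν : Measure ℂ) [IsFiniteMeasure ν]
    (hexp : ∀ t : ℝ, 0 ≤ t → ∫⁻ z, ENNReal.ofReal (Real.exp (t * z.re)) ∂ν < ⊤)
    (hcarr : ∃ R > (0 : ℝ),
      ν {z : ℂ | z.re < b * |z.im| ^ (1 / β) ∧ R < ‖z‖} = 0) :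
    ∀ s > (0 : ℝ), ∀ t ≥ (0 : ℝ),
      ∫⁻ z, ENNReal.ofReal
        (Real.exp (s * ‖z‖ ^ (1 / β)) * Real.exp (t * z.re)) ∂ν < ⊤ := by
  intro s hs t ht
  obtain ⟨R, hR, hnull⟩ := hcarr
  have hq0 : (0 : ℝ) ≤ 1 / β := by positivity
  have hq1 : 1 / β ≤ 1 := by
    rw [div_le_one (by linarith)]; linarith
  set t' : ℝ := t + s * (1 + 1 / b) with ht'def
  have ht' : 0 ≤ t' := by positivity
  set C : ℝ := Real.exp (s + s * R ^ (1 / β) + t * R + t' * R) with hCdef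
  have hlogC : s + s * R ^ (1 / β) + t * R + t' * R = Real.log C := by
    rw [hCdef, Real.log_exp]
  have hC0 : 0 ≤ C := by rw [hCdef]; exact (Real.exp_pos _).le
  clear_value t' C
  -- a.e. pointwise bound
  have hae : ∀ᵐ z ∂ν, ENNReal.ofReal
      (Real.exp (s * ‖z‖ ^ (1 / β)) * Real.exp (t * z.re)) ≤
      ENNReal.ofReal (C * Real.exp (t' * z.re)) := by
    have hmem : ∀ᵐ z ∂ν,
        ¬ (z.re < b * |z.im| ^ (1 / β) ∧ R < ‖z‖) := by
      rw [MeasureTheory.ae_iff]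
      simpa using hnull
    filter_upwards [hmem] with z hz
    rw [← Real.exp_add, hCdef, ← Real.exp_add]
    apply ENNReal.ofReal_le_ofReal
    apply Real.exp_le_exp.2
    push_neg at hz
    have habsre : z.re ≤ ‖z‖ := Complex.re_le_norm z
    have hreabs : -‖z‖ ≤ z.re := by
      have h1 := Complex.abs_re_le_norm z
      have h2 := neg_abs_le z.re
      linarith
    have hRterms : 0 ≤ s * R ^ (1 / β) + t * R := by positivity
    rcases lt_or_ge z.re (b * |z.im| ^ (1 / β)) with hcase | hcase
    · -- then |z| ≤ R
      have hzR : ‖z‖ ≤ R := hz hcase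
      have h1 : ‖z‖ ^ (1 / β) ≤ R ^ (1 / β) :=
        Real.rpow_le_rpow (norm_nonneg z) hzR hq0
      have h2 : t * z.re ≤ t * R :=
        mul_le_mul_of_nonneg_left (habsre.trans hzR) ht
      have h3 : -(t' * R) ≤ t' * z.re := by
        have : -R ≤ z.re := le_trans (by linarith [neg_le_neg hzR] :
          -R ≤ -‖z‖) hreabs
        nlinarith
      linarith [mul_le_mul_of_nonneg_left h1 hs.le, hs.le]
    · -- parabolic region
      have him : 0 ≤ b * |z.im| ^ (1 / β) := by positivity
      have hre0 : 0 ≤ z.re := le_trans him hcase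
      have hle : ‖z‖ ≤ z.re + |z.im| := by
        have := Complex.norm_le_abs_re_add_abs_im z
        rwa [abs_of_nonneg hre0] at this
      have h1 : ‖z‖ ^ (1 / β) ≤ (z.re + |z.im|) ^ (1 / β) :=
        Real.rpow_le_rpow (norm_nonneg z) hle hq0
      have h2 : (z.re + |z.im|) ^ (1 / β) ≤ z.re ^ (1 / β) + |z.im| ^ (1 / β) :=
        real_rpow_add_le_add_rpow hre0 (abs_nonneg _) hq0 hq1
      have h3 : z.re ^ (1 / β) ≤ z.re + 1 := rpow_le_add_one hre0 hq0 hq1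
      have h4 : |z.im| ^ (1 / β) ≤ z.re / b := by
        rw [le_div_iff₀ hb, mul_comm]
        exact hcase
      have h5 : ‖z‖ ^ (1 / β) ≤ z.re + 1 + z.re / b := by linarith
      have : s * ‖z‖ ^ (1 / β) ≤ s * (z.re + 1 + z.re / b) :=
        mul_le_mul_of_nonneg_left h5 hs.le
      have hb' : s * (z.re + 1 + z.re / b) = s + s * (1 + 1 / b) * z.re := by
        field_simp; ring
      rw [hb'] at this
      have ht'e : t' * z.re = t * z.re + s * (1 + 1 / b) * z.re := by
        rw [ht'def]; ring
      linarith [mul_nonneg hs.le (Real.rpow_nonneg hR.le (1 / β)),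
        mul_nonneg ht hR.le, mul_nonneg ht' hR.le]
  calc ∫⁻ z, ENNReal.ofReal
        (Real.exp (s * ‖z‖ ^ (1 / β)) * Real.exp (t * z.re)) ∂ν
      ≤ ∫⁻ z, ENNReal.ofReal (C * Real.exp (t' * z.re)) ∂ν :=
        lintegral_mono_ae hae
    _ = ∫⁻ z, ENNReal.ofReal C * ENNReal.ofReal (Real.exp (t' * z.re)) ∂ν := by
        congr 1; ext z
        rw [ENNReal.ofReal_mul hC0]
    _ = ENNReal.ofReal C * ∫⁻ z, ENNReal.ofReal (Real.exp (t' * z.re)) ∂ν :=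
        lintegral_const_mul' _ _ ENNReal.ofReal_ne_top
    _ < ⊤ := ENNReal.mul_lt_top ENNReal.ofReal_lt_top (hexp t' ht')
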